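/- Let a(x,y), A(x,y), p(x,y) be homogeneous polynomials with deg a ≤ deg A - deg p, and let σ be an invertible 2×2 matrix. If a(x,y) divides p(x,y)(D)A^σ(x,y), then a^{σ^{-1}}(x,y) divides p^{tσ}(x,y)(D)A(x,y). -/

import Mathlib

open MvPolynomial

/-- The action f^σ(x,y) = f(ax+by, cx+dy) of a matrix σ on a polynomial. -/
noncomputable def matAct (σ : Matrix (Fin 2) (Fin 2) ℂ)
    (f : MvPolynomial (Fin 2) ℂ) : MvPolynomial (Fin 2) ℂ :=
  aeval (fun i => C (σ i 0) * X 0 + C (σ i 1) * X 1) f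

/-- The differential operator p(D) obtained from p by replacing x, y with ∂/∂x, ∂/∂y,
applied to a polynomial A. -/
noncomputable def polyD (p A : MvPolynomial (Fin 2) ℂ) : MvPolynomial (Fin 2) ℂ :=
  (AddMonoidAlgebra.coeff p).sum fun m c =>
    c • ((fun f => pderiv (0 : Fin 2) f)^[m 0]
          ((fun f => pderiv (1 : Fin 2) f)^[m 1] A))

abbrev P2 := MvPolynomial (Fin 2) ℂ

lemma pderiv_comm' (i j : Fin 2) (f : P2) :
    pderiv i (pderiv j f) = pderiv j (pderiv i f) := by
  induction f using MvPolynomial.induction_on with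
  | C c => simp
  | add f g hf hg => simp [hf, hg]
  | mul_X f k hf =>
    simp only [pderiv_mul, pderiv_X, map_add, map_mul, hf, Pi.single_apply]
    split_ifs <;> simp <;> ring

noncomputable def pd (i : Fin 2) : Module.End ℂ P2 := (pderiv i).toLinearMap

lemma pd_comm : Commute (pd 0) (pd 1) :=
  LinearMap.ext fun f => pderiv_comm' 0 1 f

noncomputable def Em (m : Fin 2 →₀ ℕ) : Module.End ℂ P2 := pd 0 ^ (m 0) * pd 1 ^ (m 1)

lemma Em_add (m n : Fin 2 →₀ ℕ) : Em (m + n) = Em m * Em n := by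
  have h := (pd_comm.symm.pow_pow (m 1) (n 0))
  simp only [Em, Finsupp.add_apply, pow_add]
  rw [mul_assoc, mul_assoc, ← mul_assoc (pd 1 ^ m 1), h, mul_assoc]

noncomputable def Dop (p : P2) : Module.End ℂ P2 := (AddMonoidAlgebra.coeff p).sum fun m c => c • Em m

lemma polyD_eq (p A : P2) : polyD p A = Dop p A := by
  unfold polyD Dop
  rw [Finsupp.sum, Finsupp.sum, LinearMap.coe_sum, Finset.sum_apply]
  refine Finset.sum_congr rfl fun m _ => ?_
  simp only [LinearMap.smul_apply, Em, Module.End.mul_apply, Module.End.pow_apply, pd]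
  rfl

lemma Dop_monomial (m : Fin 2 →₀ ℕ) (c : ℂ) : Dop (monomial m c) = c • Em m := by
  unfold Dop
  rw [show ((AddMonoidAlgebra.coeff (monomial m c : P2)).sum fun m c => c • Em m)
      = Finsupp.sum (Finsupp.single m c) (fun m c => c • Em m) from rfl,
    Finsupp.sum_single_index]
  simp

lemma Dop_add (p q : P2) : Dop (p + q) = Dop p + Dop q := by
  unfold Dop
  apply Finsupp.sum_add_index' <;> intros <;> simp [add_smul]

lemma polyD_add_left (p q A : P2) : polyD (p + q) A = polyD p A + polyD q A := by
  rw [polyD_eq, Dop_add, LinearMap.add_apply, polyD_eq, polyD_eq]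

lemma Dop_mul (p q : P2) : Dop (p * q) = Dop p * Dop q := by
  induction p using MvPolynomial.induction_on' with
  | add p q hp hq => simp [add_mul, Dop_add, hp, hq]
  | monomial m c =>
    induction q using MvPolynomial.induction_on' with
    | add p q hp hq => simp [mul_add, Dop_add, hp, hq]
    | monomial n d =>
      rw [monomial_mul, Dop_monomial, Dop_monomial, Dop_monomial, Em_add,
        smul_mul_smul_comm]

lemma Dop_C (c : ℂ) : Dop (C c) = c • 1 := by
  rw [show (C c : P2) = monomial 0 c from rfl, Dop_monomial]
  simp [Em]

lemma Dop_X (i : Fin 2) : Dop (X i) = pd i := by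
  rw [show (X i : P2) = monomial (Finsupp.single i 1) 1 from rfl, Dop_monomial]
  fin_cases i <;> simp [Em, Finsupp.single_apply]

noncomputable def matActHom (σ : Matrix (Fin 2) (Fin 2) ℂ) : P2 →ₐ[ℂ] P2 :=
  aeval (fun i => C (σ i 0) * X 0 + C (σ i 1) * X 1)

lemma matAct_eq (σ : Matrix (Fin 2) (Fin 2) ℂ) (f : P2) : matAct σ f = matActHom σ f := rfl

lemma matAct_add (σ : Matrix (Fin 2) (Fin 2) ℂ) (x y : P2) :
    matAct σ (x + y) = matAct σ x + matAct σ y := by simp [matAct_eq, map_add]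

lemma matAct_mul (σ : Matrix (Fin 2) (Fin 2) ℂ) (x y : P2) :
    matAct σ (x * y) = matAct σ x * matAct σ y := by simp [matAct_eq, map_mul]

lemma matAct_C (σ : Matrix (Fin 2) (Fin 2) ℂ) (c : ℂ) :
    matAct σ (C c) = C c := by simp [matAct_eq, matActHom]

lemma matAct_X (σ : Matrix (Fin 2) (Fin 2) ℂ) (k : Fin 2) :
    matAct σ (X k) = C (σ k 0) * X 0 + C (σ k 1) * X 1 := by
  simp [matAct_eq, matActHom]

lemma matAct_comp (σ τ : Matrix (Fin 2) (Fin 2) ℂ) (f : P2) :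
    matAct τ (matAct σ f) = matAct (σ * τ) f := by
  simp only [matAct_eq]
  rw [show matActHom τ (matActHom σ f) = ((matActHom τ).comp (matActHom σ)) f from rfl,
    matActHom, matActHom, comp_aeval, matActHom]
  congr 1
  apply MvPolynomial.algHom_ext
  intro i
  simp [Matrix.mul_apply, Fin.sum_univ_two]
  ring

lemma matAct_one (f : P2) : matAct 1 f = f := by
  rw [matAct_eq, matActHom]
  have : (fun i => C ((1 : Matrix (Fin 2) (Fin 2) ℂ) i 0) * X 0
      + C ((1 : Matrix (Fin 2) (Fin 2) ℂ) i 1) * X 1) = (X : Fin 2 → P2) := by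
    funext i; fin_cases i <;> simp [Matrix.one_apply]
  rw [this]
  simp [aeval_X_left]

lemma chain_rule (σ : Matrix (Fin 2) (Fin 2) ℂ) (i : Fin 2) (A : P2) :
    pderiv i (matAct σ A) =
      matAct σ (C (σ 0 i) * pderiv 0 A + C (σ 1 i) * pderiv 1 A) := by
  induction A using MvPolynomial.induction_on with
  | C c => simp [matAct_eq, matActHom]
  | add f g hf hg =>
    rw [matAct_add, map_add, hf, hg, ← matAct_add]
    congr 1
    simp only [map_add]
    ring
  | mul_X f k hf =>
    rw [matAct_mul, pderiv_mul, hf, matAct_X, pderiv_mul, pderiv_mul]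
    fin_cases i <;> fin_cases k <;>
      simp [pderiv_X, Pi.single_apply, matAct_add, matAct_mul, matAct_C, matAct_X,
        mul_add, add_mul] <;> ring

lemma key (σ : Matrix (Fin 2) (Fin 2) ℂ) (p A : P2) :
    polyD p (matAct σ A) = matAct σ (polyD (matAct σ.transpose p) A) := by
  induction p using MvPolynomial.induction_on generalizing A with
  | C c =>
    rw [matAct_C, polyD_eq, polyD_eq, Dop_C]
    simp [matAct_eq, map_smul]
  | add p q hp hq =>
    rw [polyD_add_left, hp, hq, matAct_add, polyD_add_left, matAct_add]
  | mul_X p i hp =>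
    have hXi : ∀ B : P2, polyD (matAct σ.transpose (X i)) B
        = C (σ 0 i) * pderiv 0 B + C (σ 1 i) * pderiv 1 B := by
      intro B
      rw [matAct_X, Matrix.transpose_apply, Matrix.transpose_apply,
        polyD_eq, Dop_add, Dop_mul, Dop_mul, Dop_C, Dop_C, Dop_X, Dop_X]
      simp only [LinearMap.add_apply, Module.End.mul_apply, LinearMap.smul_apply,
        Module.End.one_apply, smul_eq_C_mul]
      rfl
    calc polyD (p * X i) (matAct σ A)
        = Dop p (Dop (X i) (matAct σ A)) := by rw [polyD_eq, Dop_mul]; rfl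
      _ = polyD p (pderiv i (matAct σ A)) := by rw [Dop_X, ← polyD_eq]; rfl
      _ = polyD p (matAct σ (polyD (matAct σ.transpose (X i)) A)) := by
          rw [chain_rule, hXi]
      _ = matAct σ (polyD (matAct σ.transpose p) (polyD (matAct σ.transpose (X i)) A)) := hp _
      _ = matAct σ (polyD (matAct σ.transpose (p * X i)) A) := by
          rw [matAct_mul, polyD_eq (matAct σ.transpose p), polyD_eq (matAct σ.transpose (X i)),
            polyD_eq, Dop_mul, Module.End.mul_apply]

/-- If a, A, p are homogeneous with deg a ≤ deg A - deg p and σ is invertible, then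
a ∣ p(D)A^σ implies a^{σ⁻¹} ∣ p^{tσ}(D)A. -/
theorem stmt_6 (σ : Matrix (Fin 2) (Fin 2) ℂ) (hσ : IsUnit σ.det)
    (a A p : MvPolynomial (Fin 2) ℂ) (da dA dp : ℕ)
    (ha : a.IsHomogeneous da) (hA : A.IsHomogeneous dA) (hp : p.IsHomogeneous dp)
    (hdeg : da ≤ dA - dp)
    (hdvd : a ∣ polyD p (matAct σ A)) :
    matAct σ⁻¹ a ∣ polyD (matAct σ.transpose p) A := by
  rw [key σ p A] at hdvd
  have h := map_dvd (matActHom σ⁻¹) hdvd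
  rw [← matAct_eq, ← matAct_eq, matAct_comp, Matrix.mul_nonsing_inv σ hσ, matAct_one] at h
  exact h
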